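/- Let F : ℝ^m → ℝ be a smooth function equal to 1 outside some compact set. For 0 < ℏ ≤ 1 define b_ℏ : ℝ^m → ℝ by b_ℏ(x) = F(x/ℏ), and set b_0 = 1 (the constant function). Then for every a ∈ C₀(ℝ^m) with a(0) = 0, the map ℏ ↦ (x ↦ b_ℏ(x)²·a(x)) from [0,1] to C₀(ℝ^m) is continuous with respect to the supremum norm. -/

import Mathlib

open scoped ZeroAtInfty

set_option maxHeartbeats 1000000 in
theorem continuity_of_reparametrized_field_sections
    {m : ℕ} (F : EuclideanSpace ℝ (Fin m) → ℝ)
    (hF : ContDiff ℝ (⊤ : ℕ∞) F)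
    (hF1 : ∃ K : Set (EuclideanSpace ℝ (Fin m)), IsCompact K ∧ ∀ x ∉ K, F x = 1)
    (b : ℝ → EuclideanSpace ℝ (Fin m) → ℝ)
    (hb0 : ∀ x, b 0 x = 1)
    (hbh : ∀ ℏ : ℝ, 0 < ℏ → ℏ ≤ 1 → ∀ x, b ℏ x = F (ℏ⁻¹ • x)) :
    ∀ a : C₀(EuclideanSpace ℝ (Fin m), ℂ), a 0 = 0 →
      ∀ G : Set.Icc (0 : ℝ) 1 → C₀(EuclideanSpace ℝ (Fin m), ℂ),
        (∀ (ℏ : Set.Icc (0 : ℝ) 1) x, G ℏ x = (↑(b ℏ x) : ℂ) ^ 2 * a x) →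
        Continuous G := by
  obtain ⟨K, hK, hK1⟩ := hF1
  intro a ha0 G hG
  -- radius bound for K
  obtain ⟨R, hR⟩ := hK.isBounded.subset_closedBall 0
  set R' : ℝ := max R 0 with hR'def
  have hKR : K ⊆ Metric.closedBall 0 R' :=
    hR.trans (Metric.closedBall_subset_closedBall (le_max_left _ _))
  have hR0 : 0 ≤ R' := le_max_right _ _
  -- bound for F
  obtain ⟨C, hC⟩ := hK.exists_bound_of_continuousOn hF.continuous.continuousOn
  set M : ℝ := max C 1 with hMdef
  have hM1 : 1 ≤ M := le_max_right _ _
  have hM0 : 0 < M := lt_of_lt_of_le one_pos hM1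
  have hMF : ∀ y, |F y| ≤ M := by
    intro y
    by_cases hy : y ∈ K
    · exact le_trans (hC y hy) (le_max_left _ _)
    · rw [hK1 y hy]; simpa using hM1
  -- bound for b
  have hbM : ∀ (ℏ : Set.Icc (0 : ℝ) 1) (x : EuclideanSpace ℝ (Fin m)), |b ℏ x| ≤ M := by
    rintro ⟨h, h0, h1⟩ x
    rcases eq_or_lt_of_le h0 with h0' | h0'
    · simp only [← h0', hb0]; simpa using hM1
    · rw [hbh h h0' h1]; exact hMF _
  -- norm bound for a
  have haM : ∀ x, ‖a x‖ ≤ ‖a‖ := by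
    intro x
    exact (calc ‖a x‖ = ‖a.toBCF x‖ := rfl
      _ ≤ ‖a.toBCF‖ := a.toBCF.norm_coe_le_norm x
      _ = ‖a‖ := ZeroAtInftyContinuousMap.norm_toBCF_eq_norm)
  -- pointwise distance formula
  have key : ∀ (h h' : Set.Icc (0 : ℝ) 1) x,
      dist (G h x) (G h' x) = |b h x ^ 2 - b h' x ^ 2| * ‖a x‖ := by
    intro h h' x
    rw [dist_eq_norm, hG, hG]
    have : (↑(b h x) : ℂ) ^ 2 * a x - (↑(b h' x) : ℂ) ^ 2 * a x
        = ((b h x ^ 2 - b h' x ^ 2 : ℝ) : ℂ) * a x := by push_cast; ring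
    rw [this, norm_mul, Complex.norm_real, Real.norm_eq_abs]
  -- uniform continuity of F
  have hFunif : UniformContinuous F := by
    have hcs : HasCompactMulSupport F :=
      HasCompactMulSupport.intro hK hK1
    exact hcs.uniformContinuous_of_continuous hF.continuous
  rw [Metric.continuous_iff]
  rintro ⟨h₀, h₀0, h₀1⟩ ε hε
  rcases eq_or_lt_of_le h₀0 with h₀' | h₀'
  · -- case ℏ₀ = 0
    subst h₀'
    -- continuity of a at 0
    have hacont := Metric.continuous_iff.mp (map_continuous a) 0 (ε / (2 * (M ^ 2 + 1)))
      (by positivity)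
    obtain ⟨δ₁, hδ₁, hδ₁'⟩ := hacont
    refine ⟨δ₁ / (R' + 1), by positivity, ?_⟩
    rintro ⟨h, hh0, hh1⟩ hdist
    rw [Subtype.dist_eq, Real.dist_eq] at hdist
    rw [sub_zero, abs_of_nonneg hh0] at hdist
    have hdist' := hdist
    rw [← ZeroAtInftyContinuousMap.dist_toBCF_eq_dist]
    have : dist ((G ⟨h, hh0, hh1⟩).toBCF) ((G ⟨0, h₀0, h₀1⟩).toBCF) ≤ ε / 2 := by
      rw [BoundedContinuousFunction.dist_le (by positivity)]
      intro x
      have hb0' : b (⟨0, h₀0, h₀1⟩ : Set.Icc (0:ℝ) 1) x = 1 := hb0 x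
      rcases eq_or_lt_of_le hh0 with hh0' | hh0'
      · have : (⟨h, hh0, hh1⟩ : Set.Icc (0:ℝ) 1) = ⟨0, h₀0, h₀1⟩ := by
          exact Subtype.ext hh0'.symm
        rw [this]
        simp [dist_self]; positivity
      · show dist (G ⟨h, hh0, hh1⟩ x) (G ⟨0, h₀0, h₀1⟩ x) ≤ ε / 2
        rw [key, hb0', one_pow]
        have hbeq : b (⟨h, hh0, hh1⟩ : Set.Icc (0:ℝ) 1) x = F (h⁻¹ • x) := hbh h hh0' hh1 x
        by_cases hx : h⁻¹ • x ∈ K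
        · -- then ‖x‖ is small
          have hxnorm : ‖h⁻¹ • x‖ ≤ R' := by
            simpa [Metric.mem_closedBall] using hKR hx
          have hxn : ‖x‖ < δ₁ := by
            have : ‖h⁻¹ • x‖ = h⁻¹ * ‖x‖ := by
              rw [norm_smul, Real.norm_eq_abs, abs_of_nonneg (by positivity)]
            rw [this] at hxnorm
            have hxle : ‖x‖ ≤ h * R' := by
              have := mul_le_mul_of_nonneg_left hxnorm (le_of_lt hh0')
              rwa [← mul_assoc, mul_inv_cancel₀ (ne_of_gt hh0'), one_mul] at this
            exact (calc ‖x‖ ≤ h * R' := hxle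
              _ ≤ h * (R' + 1) := by nlinarith
              _ < (δ₁ / (R' + 1)) * (R' + 1) := by
                  exact mul_lt_mul_of_pos_right hdist' (by positivity)
              _ = δ₁ := by field_simp)
          have hax : ‖a x‖ < ε / (2 * (M ^ 2 + 1)) := by
            have := hδ₁' x (by simpa [dist_eq_norm] using hxn)
            simpa [ha0, dist_eq_norm] using this
          have hbsq : |b (⟨h, hh0, hh1⟩ : Set.Icc (0:ℝ) 1) x ^ 2 - 1| ≤ M ^ 2 + 1 := by
            have hb1 := hbM ⟨h, hh0, hh1⟩ x
            have : b (⟨h, hh0, hh1⟩ : Set.Icc (0:ℝ) 1) x ^ 2 ≤ M ^ 2 := by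
              nlinarith [abs_nonneg (b (⟨h, hh0, hh1⟩ : Set.Icc (0:ℝ) 1) x), sq_abs (b (⟨h, hh0, hh1⟩ : Set.Icc (0:ℝ) 1) x)]
            rw [abs_le]
            constructor <;> nlinarith [sq_nonneg (b (⟨h, hh0, hh1⟩ : Set.Icc (0:ℝ) 1) x)]
          have hmain : |b (⟨h, hh0, hh1⟩ : Set.Icc (0:ℝ) 1) x ^ 2 - 1| * ‖a x‖
              ≤ (M ^ 2 + 1) * (ε / (2 * (M ^ 2 + 1))) :=
            mul_le_mul hbsq (le_of_lt hax) (norm_nonneg _) (by positivity)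
          have heps : (M ^ 2 + 1) * (ε / (2 * (M ^ 2 + 1))) = ε / 2 := by
            have h2 : M ^ 2 + 1 ≠ 0 := by positivity
            field_simp
          linarith
        · rw [hbeq, hK1 _ hx]
          simp; positivity
    exact lt_of_le_of_lt this (by linarith)
  · -- case ℏ₀ > 0
    set ε₂ : ℝ := ε / (4 * M * (‖a‖ + 1)) with hε₂def
    have hanorm : 0 ≤ ‖a‖ := norm_nonneg _
    have hε₂ : 0 < ε₂ := by positivity
    obtain ⟨δ₂, hδ₂, hδ₂'⟩ := Metric.uniformContinuous_iff.mp hFunif ε₂ hε₂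
    refine ⟨min (h₀ / 2) (δ₂ * h₀ ^ 2 / (2 * (R' + 1))), by positivity, ?_⟩
    rintro ⟨h, hh0, hh1⟩ hdist
    rw [Subtype.dist_eq, Real.dist_eq] at hdist
    have hdist1 : |h - h₀| < h₀ / 2 := lt_of_lt_of_le hdist (min_le_left _ _)
    have hdist2 : |h - h₀| < δ₂ * h₀ ^ 2 / (2 * (R' + 1)) :=
      lt_of_lt_of_le hdist (min_le_right _ _)
    have hhpos : 0 < h := by
      rcases abs_lt.mp hdist1 with ⟨hl, _⟩; linarith
    rw [← ZeroAtInftyContinuousMap.dist_toBCF_eq_dist]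
    have hle : dist ((G ⟨h, hh0, hh1⟩).toBCF) ((G ⟨h₀, h₀0, h₀1⟩).toBCF) ≤ ε / 2 := by
      rw [BoundedContinuousFunction.dist_le (by positivity)]
      intro x
      show dist (G ⟨h, hh0, hh1⟩ x) (G ⟨h₀, h₀0, h₀1⟩ x) ≤ ε / 2
      rw [key]
      have hbeq : b (⟨h, hh0, hh1⟩ : Set.Icc (0:ℝ) 1) x = F (h⁻¹ • x) := hbh h hhpos hh1 x
      have hbeq₀ : b (⟨h₀, h₀0, h₀1⟩ : Set.Icc (0:ℝ) 1) x = F (h₀⁻¹ • x) := hbh h₀ h₀' h₀1 x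
      by_cases hx : ‖x‖ ≤ R'
      · -- near part: use uniform continuity
        have hdistuv : dist (h⁻¹ • x) (h₀⁻¹ • x) < δ₂ := by
          have : dist (h⁻¹ • x) (h₀⁻¹ • x) = |h⁻¹ - h₀⁻¹| * ‖x‖ := by
            rw [dist_eq_norm, ← sub_smul, norm_smul, Real.norm_eq_abs]
          rw [this]
          have heq2 : h⁻¹ - h₀⁻¹ = (h₀ - h) / (h * h₀) := by
            field_simp
          have hinv : |h⁻¹ - h₀⁻¹| = |h - h₀| / (h * h₀) := by
            rw [heq2, abs_div, abs_of_pos (show (0:ℝ) < h * h₀ by positivity), abs_sub_comm]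
          rw [hinv]
          have hhh₀ : h₀ / 2 ≤ h := by
            rcases abs_lt.mp hdist1 with ⟨hl, _⟩; linarith
          have h1 : |h - h₀| / (h * h₀) ≤ |h - h₀| * (2 / h₀ ^ 2) := by
            rw [div_le_iff₀ (by positivity), mul_assoc]
            have hkey : 1 ≤ 2 / h₀ ^ 2 * (h * h₀) := by
              rw [div_mul_eq_mul_div, le_div_iff₀ (by positivity)]
              nlinarith
            nlinarith [abs_nonneg (h - h₀)]
          have s1 : |h - h₀| / (h * h₀) * ‖x‖ ≤ |h - h₀| * (2 / h₀ ^ 2) * R' :=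
            mul_le_mul h1 hx (norm_nonneg _) (by positivity)
          have s2 : |h - h₀| * (2 / h₀ ^ 2) * R'
              ≤ (δ₂ * h₀ ^ 2 / (2 * (R' + 1))) * (2 / h₀ ^ 2) * R' := by
            refine mul_le_mul_of_nonneg_right ?_ hR0
            exact mul_le_mul_of_nonneg_right (le_of_lt hdist2) (by positivity)
          have s3 : (δ₂ * h₀ ^ 2 / (2 * (R' + 1))) * (2 / h₀ ^ 2) * R'
              = δ₂ * (R' / (R' + 1)) := by
            have h2 : R' + 1 ≠ 0 := by positivity
            have h3 : h₀ ≠ 0 := ne_of_gt h₀'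
            field_simp
          have s4 : δ₂ * (R' / (R' + 1)) < δ₂ * 1 := by
            refine mul_lt_mul_of_pos_left ?_ hδ₂
            rw [div_lt_one (by positivity)]
            linarith
          have s5 : δ₂ * (1:ℝ) = δ₂ := mul_one _
          linarith
        have hFd : |F (h⁻¹ • x) - F (h₀⁻¹ • x)| < ε₂ := by
          have := hδ₂' hdistuv
          simpa [Real.dist_eq] using this
        have hsq : |b (⟨h, hh0, hh1⟩ : Set.Icc (0:ℝ) 1) x ^ 2
            - b (⟨h₀, h₀0, h₀1⟩ : Set.Icc (0:ℝ) 1) x ^ 2|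
            ≤ 2 * M * ε₂ := by
          have hb1 := hbM ⟨h, hh0, hh1⟩ x
          have hb2 := hbM ⟨h₀, h₀0, h₀1⟩ x
          have factored : b (⟨h, hh0, hh1⟩ : Set.Icc (0:ℝ) 1) x ^ 2
              - b (⟨h₀, h₀0, h₀1⟩ : Set.Icc (0:ℝ) 1) x ^ 2
              = (b (⟨h, hh0, hh1⟩ : Set.Icc (0:ℝ) 1) x + b (⟨h₀, h₀0, h₀1⟩ : Set.Icc (0:ℝ) 1) x)
                * (b (⟨h, hh0, hh1⟩ : Set.Icc (0:ℝ) 1) x - b (⟨h₀, h₀0, h₀1⟩ : Set.Icc (0:ℝ) 1) x) := by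
            ring
          rw [factored, abs_mul]
          have hsum : |b (⟨h, hh0, hh1⟩ : Set.Icc (0:ℝ) 1) x + b (⟨h₀, h₀0, h₀1⟩ : Set.Icc (0:ℝ) 1) x| ≤ 2 * M := by
            have habs := abs_add_le (b (⟨h, hh0, hh1⟩ : Set.Icc (0:ℝ) 1) x) (b (⟨h₀, h₀0, h₀1⟩ : Set.Icc (0:ℝ) 1) x)
            linarith
          have hdiff : |b (⟨h, hh0, hh1⟩ : Set.Icc (0:ℝ) 1) x - b (⟨h₀, h₀0, h₀1⟩ : Set.Icc (0:ℝ) 1) x| ≤ ε₂ := by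
            rw [hbeq, hbeq₀]; exact le_of_lt hFd
          exact mul_le_mul hsum hdiff (abs_nonneg _) (by positivity)
        have hax2 : ‖a x‖ ≤ ‖a‖ + 1 := le_trans (haM x) (by linarith)
        have hmain : |b (⟨h, hh0, hh1⟩ : Set.Icc (0:ℝ) 1) x ^ 2
            - b (⟨h₀, h₀0, h₀1⟩ : Set.Icc (0:ℝ) 1) x ^ 2| * ‖a x‖
            ≤ (2 * M * ε₂) * (‖a‖ + 1) :=
          mul_le_mul hsq hax2 (norm_nonneg _) (by positivity)
        have heps : (2 * M * ε₂) * (‖a‖ + 1) = ε / 2 := by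
          rw [hε₂def]
          have h1 : M ≠ 0 := ne_of_gt hM0
          have h2 : ‖a‖ + 1 ≠ 0 := by positivity
          field_simp
          ring
        linarith
      · -- far part: both are 1
        push_neg at hx
        have houtside : ∀ t : ℝ, 0 < t → t ≤ 1 → t⁻¹ • x ∉ K := by
          intro t ht0 ht1 hmem
          have : ‖t⁻¹ • x‖ ≤ R' := by simpa [Metric.mem_closedBall] using hKR hmem
          have hn : ‖t⁻¹ • x‖ = t⁻¹ * ‖x‖ := by
            rw [norm_smul, Real.norm_eq_abs, abs_of_nonneg (by positivity)]
          have htinv : 1 ≤ t⁻¹ := by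
            have hprod : t * t⁻¹ = 1 := mul_inv_cancel₀ (ne_of_gt ht0)
            nlinarith
          rw [hn] at this
          nlinarith [norm_nonneg x]
        rw [hbeq, hbeq₀, hK1 _ (houtside h hhpos hh1), hK1 _ (houtside h₀ h₀' h₀1)]
        simp
        positivity
    exact lt_of_le_of_lt hle (by linarith)
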